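/- For every integer k ≥ 1 there exists a constant C > 0 such that for every integer n ≥ 1 the following holds: for every family of n pairwise distinct continuous functions f_1, …, f_n : ℝ → ℝ such that every two of them have at most k common points (the set {x : f_i(x) = f_j(x)} has at most k elements for all i ≠ j) and no three of them share a common point, the number of tangent pairs is at most C · n^{2 − 1/(k+1)}. -/

import Mathlib

/-- Two bi-infinite `x`-monotone curves (graphs of continuous functions `ℝ → ℝ`) are
tangent (touching) if they have exactly one common point and their difference does not
change sign. -/
def Tangent (f g : ℝ → ℝ) : Prop :=
  (∃! x, f x = g x) ∧ ((∀ x, f x ≤ g x) ∨ (∀ x, g x ≤ f x))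

lemma not_tangent_self {f : ℝ → ℝ} (h : Tangent f f) : False := by
  obtain ⟨⟨x, hx, hu⟩, -⟩ := h
  have h0 := hu (x + 1) rfl
  linarith

lemma exists_zero_between {g : ℝ → ℝ} (hg : Continuous g) {u v : ℝ}
    (hu : g u < 0) (hv : 0 < g v) :
    ∃ z, g z = 0 ∧ min u v < z ∧ z < max u v := by
  rcases lt_trichotomy u v with h | h | h
  · have : (0 : ℝ) ∈ Set.Ioo (g u) (g v) := ⟨hu, hv⟩
    have hsub := intermediate_value_Ioo h.le (hg.continuousOn (s := Set.Icc u v))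
    obtain ⟨z, hz, hz0⟩ := hsub this
    exact ⟨z, hz0, by rw [min_eq_left h.le]; exact hz.1, by rw [max_eq_right h.le]; exact hz.2⟩
  · exfalso; rw [h] at hu; linarith
  · have : (0 : ℝ) ∈ Set.Ioo (g u) (g v) := ⟨hu, hv⟩
    have hsub := intermediate_value_Ioo' h.le (hg.continuousOn (s := Set.Icc v u))
    obtain ⟨z, hz, hz0⟩ := hsub ⟨hu, hv⟩
    exact ⟨z, hz0, by rw [min_eq_right h.le]; exact hz.1, by rw [max_eq_left h.le]; exact hz.2⟩

lemma two_zeros {g : ℝ → ℝ} (hg : Continuous g) {a d b c : ℝ}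
    (ha : g a < 0) (hd : g d < 0) (hb : 0 < g b) (hc : 0 < g c)
    (hord : a < c ↔ b < d) :
    ∃ z₁ z₂, z₁ ≠ z₂ ∧ g z₁ = 0 ∧ g z₂ = 0 ∧
      z₁ ∈ Set.Icc (min (min a d) (min b c)) (max (max a d) (max b c)) ∧
      z₂ ∈ Set.Icc (min (min a d) (min b c)) (max (max a d) (max b c)) := by
  have hgu : g (min a d) < 0 := by
    rcases min_cases a d with ⟨h, -⟩ | ⟨h, -⟩ <;> rw [h] <;> assumption
  have hgU : g (max a d) < 0 := by
    rcases max_cases a d with ⟨h, -⟩ | ⟨h, -⟩ <;> rw [h] <;> assumption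
  have hgv : 0 < g (min b c) := by
    rcases min_cases b c with ⟨h, -⟩ | ⟨h, -⟩ <;> rw [h] <;> assumption
  have hgV : 0 < g (max b c) := by
    rcases max_cases b c with ⟨h, -⟩ | ⟨h, -⟩ <;> rw [h] <;> assumption
  have m1 := min_le_left a d
  have m2 := min_le_right a d
  have m3 := le_max_left a d
  have m4 := le_max_right a d
  have m5 := min_le_left b c
  have m6 := min_le_right b c
  have m7 := le_max_left b c
  have m8 := le_max_right b c
  have hne1 : min b c ≤ max a d := by
    by_contra hcon; push_neg at hcon
    have h1 : a < c := by linarith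
    have h2 : b < d := hord.mp h1
    linarith
  have hne2 : min a d ≤ max b c := by
    by_contra hcon; push_neg at hcon
    have h1 : ¬ a < c := by intro h; linarith
    have h2 : b < d := by linarith
    exact h1 (hord.mpr h2)
  rcases lt_trichotomy (min a d) (min b c) with h | h | h
  · obtain ⟨z₁, hz₁, hz₁l, hz₁r⟩ := exists_zero_between hg hgu hgv
    rw [min_eq_left h.le] at hz₁l; rw [max_eq_right h.le] at hz₁r
    have hvU : min b c < max a d :=
      lt_of_le_of_ne hne1 (fun hh => by rw [hh] at hgv; linarith)
    obtain ⟨z₂, hz₂, hz₂l, hz₂r⟩ := exists_zero_between hg hgU hgv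
    rw [min_eq_right hvU.le] at hz₂l; rw [max_eq_left hvU.le] at hz₂r
    refine ⟨z₁, z₂, by linarith, hz₁, hz₂, ?_, ?_⟩
    · constructor
      · exact le_trans (min_le_left _ _) hz₁l.le
      · exact le_trans hz₁r.le (le_trans (min_le_left b c) (le_trans m7 (le_max_right _ _)))
    · constructor
      · exact le_trans (min_le_right _ _) (by linarith)
      · exact le_trans hz₂r.le (le_max_left _ _)
  · exfalso; rw [h] at hgu; linarith
  · obtain ⟨z₁, hz₁, hz₁l, hz₁r⟩ := exists_zero_between hg hgu hgv
    rw [min_eq_right h.le] at hz₁l; rw [max_eq_left h.le] at hz₁r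
    have huV : min a d < max b c :=
      lt_of_le_of_ne hne2 (fun hh => by rw [← hh] at hgV; linarith)
    obtain ⟨z₂, hz₂, hz₂l, hz₂r⟩ := exists_zero_between hg hgu hgV
    rw [min_eq_left huV.le] at hz₂l; rw [max_eq_right huV.le] at hz₂r
    refine ⟨z₁, z₂, by linarith, hz₁, hz₂, ?_, ?_⟩
    · constructor
      · exact le_trans (min_le_right _ _) hz₁l.le
      · exact le_trans hz₁r.le (le_trans (min_le_left a d) (le_trans m3 (le_max_left _ _)))
    · constructor
      · exact le_trans (min_le_left _ _) (by linarith)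
      · exact le_trans hz₂r.le (le_max_right _ _)

def TK (k : ℕ) : ℕ := Fintype.card ((Fin (k+1) → Bool) ×
  (Fin (k+1) → Fin ((k+1)*(k+1)*k+1)) × (Fin (k+1) → Fin (k+1) → Bool))

open scoped Classical in
lemma key_bound (k : ℕ) {n : ℕ} (f : Fin n → ℝ → ℝ)
    (hcont : ∀ i, Continuous (f i))
    (hk2 : ∀ i j : Fin n, i ≠ j →
      {x : ℝ | f i x = f j x}.Finite ∧ {x : ℝ | f i x = f j x}.ncard ≤ k)
    (hno3 : ¬ ∃ (x : ℝ) (i j l : Fin n), i ≠ j ∧ j ≠ l ∧ i ≠ l ∧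
      f i x = f j x ∧ f j x = f l x)
    (e : Fin (k+1) → Fin n) (he : Function.Injective e) :
    (Finset.univ.filter fun b : Fin n => ∀ m, Tangent (f (e m)) (f b)).card ≤ TK k := by
  classical
  by_contra hcard
  push_neg at hcard
  set CN := Finset.univ.filter fun b : Fin n => ∀ m, Tangent (f (e m)) (f b) with hCN
  set M := (k+1)*(k+1)*k with hM
  have htri : ∀ (i j l : Fin n) (x : ℝ), i ≠ j → j ≠ l → i ≠ l →
      f i x = f j x → f j x = f l x → False := by
    intro i j l x h1 h2 h3 h4 h5; exact hno3 ⟨x, i, j, l, h1, h2, h3, h4, h5⟩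
  have hbe : ∀ b ∈ CN, ∀ m, e m ≠ b := by
    intro b hb m hEq
    have h := (Finset.mem_filter.mp hb).2 m
    rw [hEq] at h; exact not_tangent_self h
  -- the finite set of crossing points among the k+1 center curves
  set FP : Fin (k+1) × Fin (k+1) → Finset ℝ := fun p =>
    if h : p.1 ≠ p.2 then ((hk2 (e p.1) (e p.2) (fun hh => h (he hh))).1.toFinset) else ∅
    with hFP
  set ZF : Finset ℝ := Finset.univ.biUnion FP with hZF
  have hZmem : ∀ (m m' : Fin (k+1)) (x : ℝ), m ≠ m' → f (e m) x = f (e m') x → x ∈ ZF := by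
    intro m m' x hmm hx
    refine Finset.mem_biUnion.mpr ⟨(m, m'), Finset.mem_univ _, ?_⟩
    rw [hFP]; simp only [dif_pos hmm]
    exact (Set.Finite.mem_toFinset _).mpr hx
  have hZcard : ZF.card ≤ M := by
    refine le_trans (Finset.card_biUnion_le) ?_
    have hb : ∀ p ∈ (Finset.univ : Finset (Fin (k+1) × Fin (k+1))), (FP p).card ≤ k := by
      intro p _
      rw [hFP]
      by_cases h : p.1 ≠ p.2
      · simp only [dif_pos h]
        exact le_trans (le_of_eq (Set.ncard_eq_toFinset_card _
          (hk2 (e p.1) (e p.2) (fun hh => h (he hh))).1).symm)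
          (hk2 (e p.1) (e p.2) (fun hh => h (he hh))).2
      · simp [dif_neg h]
    refine le_trans (Finset.sum_le_card_nsmul _ _ k hb) ?_
    simp [hM, mul_comm, mul_assoc, mul_left_comm]
  set cnt : ℝ → ℕ := fun x => (ZF.filter (· < x)).card with hcnt
  have hcntM : ∀ x, cnt x ≤ M := fun x => le_trans (Finset.card_filter_le _ _) hZcard
  have hcnt_mono : ∀ u v : ℝ, u ≤ v → cnt u ≤ cnt v := by
    intro u v huv
    apply Finset.card_le_card
    intro z hz
    simp only [Finset.mem_filter] at hz ⊢
    exact ⟨hz.1, lt_of_lt_of_le hz.2 huv⟩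
  have hcnt_lt : ∀ u w v : ℝ, w ∈ ZF → u < w → w < v → cnt u < cnt v := by
    intro u w v hw h1 h2
    apply Finset.card_lt_card
    constructor
    · intro z hz
      simp only [Finset.mem_filter] at hz ⊢
      exact ⟨hz.1, by linarith [hz.2]⟩
    · intro hsub
      have hw1 : w ∈ ZF.filter (· < v) := Finset.mem_filter.mpr ⟨hw, h2⟩
      have hw2 := hsub hw1
      simp only [Finset.mem_filter] at hw2
      linarith [hw2.2]
  have hcnt_between : ∀ (p q z : ℝ) (ℓ : ℕ), cnt p = ℓ → cnt q = ℓ →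
      min p q ≤ z → z ≤ max p q → cnt z = ℓ := by
    intro p q z ℓ hp hq h1 h2
    rcases le_total p q with h | h
    · rw [min_eq_left h] at h1; rw [max_eq_right h] at h2
      exact le_antisymm (hq ▸ hcnt_mono z q h2) (hp ▸ hcnt_mono p z h1)
    · rw [min_eq_right h] at h1; rw [max_eq_left h] at h2
      exact le_antisymm (hp ▸ hcnt_mono z p h2) (hq ▸ hcnt_mono q z h1)
  -- touch points
  set tp : Fin n → Fin (k+1) → ℝ := fun b m =>
    if h : ∃ x, f (e m) x = f b x then h.choose else 0 with htpdef
  have htp_spec : ∀ b ∈ CN, ∀ m, f (e m) (tp b m) = f b (tp b m) := by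
    intro b hb m
    have h := ((Finset.mem_filter.mp hb).2 m).1.exists
    rw [htpdef]; simp only [dif_pos h]; exact h.choose_spec
  have hside : ∀ b ∈ CN, ∀ m, (∀ x, f (e m) x ≤ f b x) ∨ (∀ x, f b x ≤ f (e m) x) :=
    fun b hb m => ((Finset.mem_filter.mp hb).2 m).2
  -- class map and pigeonhole
  set χ : Fin n → (Fin (k+1) → Bool) × (Fin (k+1) → Fin (M+1)) × (Fin (k+1) → Fin (k+1) → Bool) :=
    fun b => (fun m => decide (∀ x, f (e m) x ≤ f b x),
              fun m => ⟨min (cnt (tp b m)) M, Nat.lt_succ_of_le (min_le_right _ _)⟩,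
              fun m m' => decide (tp b m ≤ tp b m')) with hχ
  obtain ⟨b, hb, b', hb', hbne, hEq⟩ :=
    Finset.exists_ne_map_eq_of_card_lt_of_maps_to (t := (Finset.univ : Finset _))
      (by simpa [TK, Finset.card_univ] using hcard) (fun a _ => Finset.mem_univ (χ a))
  have hσ : ∀ m, (∀ x, f (e m) x ≤ f b x) ↔ (∀ x, f (e m) x ≤ f b' x) := by
    intro m
    have h := congrFun (congrArg Prod.fst hEq) m
    simpa [hχ] using h
  have hcnteq : ∀ m, cnt (tp b' m) = cnt (tp b m) := by
    intro m
    have h := congrFun (congrArg (fun p => p.2.1) hEq) m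
    have h1 : min (cnt (tp b m)) M = min (cnt (tp b' m)) M := congrArg Fin.val h
    rw [min_eq_left (hcntM _), min_eq_left (hcntM _)] at h1
    exact h1.symm
  have hordeq : ∀ m m', (tp b m ≤ tp b m') ↔ (tp b' m ≤ tp b' m') := by
    intro m m'
    have h := congrFun (congrFun (congrArg (fun p => p.2.2) hEq) m) m'
    simpa [hχ] using h
  have hbemem := hbe b hb
  have hbemem' := hbe b' hb'
  set g : ℝ → ℝ := fun x => f b x - f b' x with hg
  have hgc : Continuous g := (hcont b).sub (hcont b')
  have hgXneg : ∀ m, (∀ x, f (e m) x ≤ f b x) → g (tp b m) < 0 := by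
    intro m hP
    have h1 := htp_spec b hb m
    have h2 : f (e m) (tp b m) ≤ f b' (tp b m) := (hσ m).mp hP (tp b m)
    rcases lt_or_eq_of_le (h1 ▸ h2) with h | h
    · simp only [hg]; linarith
    · exact (htri (e m) b b' (tp b m) (hbemem m) hbne (hbemem' m) h1 h).elim
  have hgXpos : ∀ m, ¬(∀ x, f (e m) x ≤ f b x) → 0 < g (tp b m) := by
    intro m hP
    have hsb' : ∀ x, f b' x ≤ f (e m) x :=
      (hside b' hb' m).resolve_left (fun h => hP ((hσ m).mpr h))
    have h1 := htp_spec b hb m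
    have h2 : f b' (tp b m) ≤ f (e m) (tp b m) := hsb' (tp b m)
    rcases lt_or_eq_of_le (h1 ▸ h2) with h | h
    · simp only [hg]; linarith
    · exact (htri (e m) b b' (tp b m) (hbemem m) hbne (hbemem' m) h1 h.symm).elim
  have hgYpos : ∀ m, (∀ x, f (e m) x ≤ f b x) → 0 < g (tp b' m) := by
    intro m hP
    have h1 := htp_spec b' hb' m
    have h2 : f (e m) (tp b' m) ≤ f b (tp b' m) := hP (tp b' m)
    rcases lt_or_eq_of_le (h1 ▸ h2) with h | h
    · simp only [hg]; linarith
    · exact (htri (e m) b' b (tp b' m) (hbemem' m) (Ne.symm hbne) (hbemem m) h1 h).elim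
  have hgYneg : ∀ m, ¬(∀ x, f (e m) x ≤ f b x) → g (tp b' m) < 0 := by
    intro m hP
    have hsb : ∀ x, f b x ≤ f (e m) x := (hside b hb m).resolve_left hP
    have h1 := htp_spec b' hb' m
    have h2 : f b (tp b' m) ≤ f (e m) (tp b' m) := hsb (tp b' m)
    rcases lt_or_eq_of_le (h1 ▸ h2) with h | h
    · simp only [hg]; linarith
    · exact (htri (e m) b' b (tp b' m) (hbemem' m) (Ne.symm hbne) (hbemem m) h1 h.symm).elim
  have hnoZbetween : ∀ u v w : ℝ, cnt u = cnt v → w ∈ ZF → min u v < w → w < max u v → False := by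
    intro u v w hc hw h1 h2
    rcases le_total u v with h | h
    · rw [min_eq_left h] at h1; rw [max_eq_right h] at h2
      exact absurd hc (Nat.ne_of_lt (hcnt_lt u w v hw h1 h2))
    · rw [min_eq_right h] at h1; rw [max_eq_left h] at h2
      exact absurd hc.symm (Nat.ne_of_lt (hcnt_lt v w u hw h1 h2))
  have hF1 : ∀ m m', m ≠ m' → cnt (tp b m) = cnt (tp b m') →
      ((∀ x, f (e m) x ≤ f b x) ↔ (∀ x, f (e m') x ≤ f b x)) → False := by
    intro m m' hmm hc hPiff
    have h1 := htp_spec b hb m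
    have h1' := htp_spec b hb m'
    have hemm' : e m ≠ e m' := fun h => hmm (he h)
    have hDc : Continuous (fun x => f (e m) x - f (e m') x) := (hcont _).sub (hcont _)
    by_cases hP : (∀ x, f (e m) x ≤ f b x)
    · have hP' := hPiff.mp hP
      have s1 : f (e m') (tp b m) < f (e m) (tp b m) := by
        rcases lt_or_eq_of_le (hP' (tp b m)) with h | h
        · linarith [h1]
        · exact (htri (e m) b (e m') (tp b m) (hbemem m)
            (Ne.symm (hbemem m')) hemm' h1 h.symm).elim
      have s2 : f (e m) (tp b m') < f (e m') (tp b m') := by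
        rcases lt_or_eq_of_le (hP (tp b m')) with h | h
        · linarith [h1']
        · exact (htri (e m') b (e m) (tp b m') (hbemem m')
            (Ne.symm (hbemem m)) (Ne.symm hemm') h1' h.symm).elim
      obtain ⟨w, hw0, hwl, hwr⟩ := exists_zero_between hDc
        (u := tp b m') (v := tp b m) (by show _ - _ < (0:ℝ); linarith) (by show (0:ℝ) < _ - _; linarith)
      exact hnoZbetween _ _ w hc.symm (hZmem m m' w hmm (by linarith [hw0])) hwl hwr
    · have hP' : ¬ (∀ x, f (e m') x ≤ f b x) := fun h => hP (hPiff.mpr h)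
      have hsb : ∀ x, f b x ≤ f (e m) x := (hside b hb m).resolve_left hP
      have hsb' : ∀ x, f b x ≤ f (e m') x := (hside b hb m').resolve_left hP'
      have s1 : f (e m) (tp b m) < f (e m') (tp b m) := by
        rcases lt_or_eq_of_le (hsb' (tp b m)) with h | h
        · linarith [h1]
        · exact (htri (e m) b (e m') (tp b m) (hbemem m)
            (Ne.symm (hbemem m')) hemm' h1 h).elim
      have s2 : f (e m') (tp b m') < f (e m) (tp b m') := by
        rcases lt_or_eq_of_le (hsb (tp b m')) with h | h
        · linarith [h1']
        · exact (htri (e m') b (e m) (tp b m') (hbemem m')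
            (Ne.symm (hbemem m)) (Ne.symm hemm') h1' h).elim
      obtain ⟨w, hw0, hwl, hwr⟩ := exists_zero_between hDc
        (u := tp b m) (v := tp b m') (by show _ - _ < (0:ℝ); linarith) (by show (0:ℝ) < _ - _; linarith)
      exact hnoZbetween _ _ w hc (hZmem m m' w hmm (by linarith [hw0])) hwl hwr
  set ℓf : Fin (k+1) → ℕ := fun m => cnt (tp b m) with hlf
  set Locc := Finset.univ.image ℓf with hLocc
  set Fib : ℕ → Finset (Fin (k+1)) := fun ℓ => Finset.univ.filter fun m => ℓf m = ℓ with hFibdef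
  have hfibcard2 : ∀ ℓ, (Fib ℓ).card ≤ 2 := by
    intro ℓ
    by_contra hgt; push_neg at hgt
    obtain ⟨m1, m2, m3, hm1, hm2, hm3, h12, h13, h23⟩ := Finset.two_lt_card_iff.mp hgt
    have e1 : ℓf m1 = ℓ := (Finset.mem_filter.mp hm1).2
    have e2 : ℓf m2 = ℓ := (Finset.mem_filter.mp hm2).2
    have e3 : ℓf m3 = ℓ := (Finset.mem_filter.mp hm3).2
    by_cases p1 : (∀ x, f (e m1) x ≤ f b x) <;>
      by_cases p2 : (∀ x, f (e m2) x ≤ f b x) <;>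
      by_cases p3 : (∀ x, f (e m3) x ≤ f b x)
    · exact hF1 m1 m2 h12 (e1.trans e2.symm) (iff_of_true p1 p2)
    · exact hF1 m1 m2 h12 (e1.trans e2.symm) (iff_of_true p1 p2)
    · exact hF1 m1 m3 h13 (e1.trans e3.symm) (iff_of_true p1 p3)
    · exact hF1 m2 m3 h23 (e2.trans e3.symm) (iff_of_false p2 p3)
    · exact hF1 m2 m3 h23 (e2.trans e3.symm) (iff_of_true p2 p3)
    · exact hF1 m1 m3 h13 (e1.trans e3.symm) (iff_of_false p1 p3)
    · exact hF1 m1 m2 h12 (e1.trans e2.symm) (iff_of_false p1 p2)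
    · exact hF1 m1 m2 h12 (e1.trans e2.symm) (iff_of_false p1 p2)
  have hfib : ∀ ℓ ∈ Locc, ∃ F : Finset ℝ, F.card = (Fib ℓ).card ∧
      ∀ z ∈ F, f b z = f b' z ∧ cnt z = ℓ := by
    intro ℓ hl
    have hne : (Fib ℓ).Nonempty := by
      obtain ⟨m0, -, hm0⟩ := Finset.mem_image.mp hl
      exact ⟨m0, Finset.mem_filter.mpr ⟨Finset.mem_univ _, hm0⟩⟩
    rcases Nat.lt_or_ge (Fib ℓ).card 2 with hcard1 | hcard2
    · -- card = 1
      have h1 : (Fib ℓ).card = 1 := le_antisymm (by omega) (Finset.card_pos.mpr hne)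
      obtain ⟨m, hm⟩ := Finset.card_eq_one.mp h1
      have hmem : m ∈ Fib ℓ := hm ▸ Finset.mem_singleton_self m
      have eX : cnt (tp b m) = ℓ := (Finset.mem_filter.mp hmem).2
      have eY : cnt (tp b' m) = ℓ := (hcnteq m).trans eX
      by_cases hP : (∀ x, f (e m) x ≤ f b x)
      · obtain ⟨z, hz0, hzl, hzr⟩ := exists_zero_between hgc (hgXneg m hP) (hgYpos m hP)
        refine ⟨{z}, by rw [Finset.card_singleton, h1], ?_⟩
        intro z' hz'
        rw [Finset.mem_singleton] at hz'; subst hz'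
        exact ⟨sub_eq_zero.mp hz0,
          hcnt_between (tp b m) (tp b' m) z' ℓ eX eY hzl.le hzr.le⟩
      · obtain ⟨z, hz0, hzl, hzr⟩ := exists_zero_between hgc (hgYneg m hP) (hgXpos m hP)
        refine ⟨{z}, by rw [Finset.card_singleton, h1], ?_⟩
        intro z' hz'
        rw [Finset.mem_singleton] at hz'; subst hz'
        exact ⟨sub_eq_zero.mp hz0,
          hcnt_between (tp b' m) (tp b m) z' ℓ eY eX hzl.le hzr.le⟩
    · -- card = 2
      have h2 : (Fib ℓ).card = 2 := le_antisymm (hfibcard2 ℓ) hcard2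
      obtain ⟨m1, m2, hm12, hFeq⟩ := Finset.card_eq_two.mp h2
      have hmem1 : m1 ∈ Fib ℓ := hFeq ▸ Finset.mem_insert_self _ _
      have hmem2 : m2 ∈ Fib ℓ := hFeq ▸ Finset.mem_insert_of_mem (Finset.mem_singleton_self _)
      have e1 : cnt (tp b m1) = ℓ := (Finset.mem_filter.mp hmem1).2
      have e2 : cnt (tp b m2) = ℓ := (Finset.mem_filter.mp hmem2).2
      have eY1 : cnt (tp b' m1) = ℓ := (hcnteq m1).trans e1
      have eY2 : cnt (tp b' m2) = ℓ := (hcnteq m2).trans e2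
      have hdiff := hF1 m1 m2 hm12 (e1.trans e2.symm)
      have main : ∀ mA mB : Fin (k+1), cnt (tp b mA) = ℓ → cnt (tp b mB) = ℓ →
          (∀ x, f (e mA) x ≤ f b x) → ¬ (∀ x, f (e mB) x ≤ f b x) →
          ∃ F : Finset ℝ, F.card = (Fib ℓ).card ∧ ∀ z ∈ F, f b z = f b' z ∧ cnt z = ℓ := by
        intro mA mB eA eB hPA hPB
        have eYA : cnt (tp b' mA) = ℓ := (hcnteq mA).trans eA
        have eYB : cnt (tp b' mB) = ℓ := (hcnteq mB).trans eB
        have hord : tp b mA < tp b mB ↔ tp b' mA < tp b' mB := by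
          rw [← not_le, ← not_le, hordeq mB mA]
        obtain ⟨z₁, z₂, hz12, hz10, hz20, hz1m, hz2m⟩ :=
          two_zeros hgc (hgXneg mA hPA) (hgYneg mB hPB) (hgYpos mA hPA) (hgXpos mB hPB) hord
        have hminl : cnt (min (min (tp b mA) (tp b' mB)) (min (tp b' mA) (tp b mB))) = ℓ := by
          rcases min_cases (min (tp b mA) (tp b' mB)) (min (tp b' mA) (tp b mB))
            with ⟨hh, -⟩ | ⟨hh, -⟩ <;> rw [hh]
          · rcases min_cases (tp b mA) (tp b' mB) with ⟨hh2, -⟩ | ⟨hh2, -⟩ <;> rw [hh2]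
            · exact eA
            · exact eYB
          · rcases min_cases (tp b' mA) (tp b mB) with ⟨hh2, -⟩ | ⟨hh2, -⟩ <;> rw [hh2]
            · exact eYA
            · exact eB
        have hmaxl : cnt (max (max (tp b mA) (tp b' mB)) (max (tp b' mA) (tp b mB))) = ℓ := by
          rcases max_cases (max (tp b mA) (tp b' mB)) (max (tp b' mA) (tp b mB))
            with ⟨hh, -⟩ | ⟨hh, -⟩ <;> rw [hh]
          · rcases max_cases (tp b mA) (tp b' mB) with ⟨hh2, -⟩ | ⟨hh2, -⟩ <;> rw [hh2]
            · exact eA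
            · exact eYB
          · rcases max_cases (tp b' mA) (tp b mB) with ⟨hh2, -⟩ | ⟨hh2, -⟩ <;> rw [hh2]
            · exact eYA
            · exact eB
        refine ⟨{z₁, z₂}, by rw [Finset.card_pair hz12, h2], ?_⟩
        intro z' hz'
        rcases Finset.mem_insert.mp hz' with hz' | hz'
        · subst hz'
          exact ⟨sub_eq_zero.mp hz10, hcnt_between _ _ z' ℓ hminl hmaxl
            (le_trans (min_le_left _ _) hz1m.1) (le_trans hz1m.2 (le_max_right _ _))⟩
        · rw [Finset.mem_singleton] at hz'; subst hz'
          exact ⟨sub_eq_zero.mp hz20, hcnt_between _ _ z' ℓ hminl hmaxl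
            (le_trans (min_le_left _ _) hz2m.1) (le_trans hz2m.2 (le_max_right _ _))⟩
      by_cases hP1 : (∀ x, f (e m1) x ≤ f b x)
      · have hP2 : ¬ (∀ x, f (e m2) x ≤ f b x) := fun h => hdiff (iff_of_true hP1 h)
        exact main m1 m2 e1 e2 hP1 hP2
      · have hP2 : (∀ x, f (e m2) x ≤ f b x) := by
          by_contra h; exact hdiff (iff_of_false hP1 h)
        exact main m2 m1 e2 e1 hP2 hP1
  have hch : ∀ ℓ : ℕ, ∃ F : Finset ℝ, ℓ ∈ Locc →
      (F.card = (Fib ℓ).card ∧ ∀ z ∈ F, f b z = f b' z ∧ cnt z = ℓ) := by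
    intro ℓ
    by_cases h : ℓ ∈ Locc
    · obtain ⟨F, hF⟩ := hfib ℓ h; exact ⟨F, fun _ => hF⟩
    · exact ⟨∅, fun h' => absurd h' h⟩
  choose F hF using hch
  have hdisj : ∀ ℓ1 ∈ Locc, ∀ ℓ2 ∈ Locc, ℓ1 ≠ ℓ2 → Disjoint (F ℓ1) (F ℓ2) := by
    intro ℓ1 h1 ℓ2 h2 hne12
    rw [Finset.disjoint_left]
    intro z hz1 hz2
    exact hne12 ((((hF ℓ1 h1).2 z hz1).2).symm.trans (((hF ℓ2 h2).2 z hz2).2))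
  set S := Locc.biUnion F with hS
  have hScard : S.card = k+1 := by
    rw [hS, Finset.card_biUnion hdisj]
    have hsum : ∑ ℓ ∈ Locc, (F ℓ).card = ∑ ℓ ∈ Locc, (Fib ℓ).card :=
      Finset.sum_congr rfl (fun ℓ hℓ => (hF ℓ hℓ).1)
    rw [hsum, hLocc, hFibdef]
    rw [← Finset.card_eq_sum_card_image ℓf Finset.univ]
    simp
  have hsub : (↑S : Set ℝ) ⊆ {x : ℝ | f b x = f b' x} := by
    intro z hz
    simp only [hS, Finset.coe_biUnion, Set.mem_iUnion, Finset.mem_coe] at hz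
    obtain ⟨ℓ, hℓ, hzF⟩ := hz
    exact ((hF ℓ hℓ).2 z hzF).1
  have hkk := hk2 b b' hbne
  have hfinal : (k+1 : ℕ) ≤ k := by
    calc (k+1 : ℕ) = S.card := hScard.symm
      _ = (↑S : Set ℝ).ncard := (Set.ncard_coe_finset S).symm
      _ ≤ {x : ℝ | f b x = f b' x}.ncard := Set.ncard_le_ncard hsub hkk.1
      _ ≤ k := hkk.2
  omega


theorem stmt17 (k : ℕ) (hk : 1 ≤ k) :
    ∃ C : ℝ, 0 < C ∧ ∀ n : ℕ, 1 ≤ n →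
      ∀ f : Fin n → ℝ → ℝ,
        (∀ i, Continuous (f i)) →
        Function.Injective f →
        -- every two curves have at most `k` common points
        (∀ i j : Fin n, i ≠ j →
          {x : ℝ | f i x = f j x}.Finite ∧ {x : ℝ | f i x = f j x}.ncard ≤ k) →
        -- no three curves share a common point
        (¬ ∃ (x : ℝ) (i j l : Fin n), i ≠ j ∧ j ≠ l ∧ i ≠ l ∧
          f i x = f j x ∧ f j x = f l x) →
        ({p : Fin n × Fin n | p.1 < p.2 ∧ Tangent (f p.1) (f p.2)}.ncard : ℝ) ≤
          C * (n : ℝ) ^ ((2 : ℝ) - 1 / (k + 1)) := by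
  classical
  set C0 : ℕ := TK k + (k+1)^2 + 1 with hC0
  refine ⟨(C0 : ℝ), by positivity, ?_⟩
  intro n hn f hcont hinj hk2 hno3
  set N : Fin n → Finset (Fin n) :=
    fun b => Finset.univ.filter (fun a => Tangent (f a) (f b)) with hN
  set Ef : Finset (Fin n × Fin n) :=
    Finset.univ.filter (fun p => p.1 < p.2 ∧ Tangent (f p.1) (f p.2)) with hEf
  set S2 : Finset (Fin n × Fin n) :=
    Finset.univ.filter (fun p => Tangent (f p.1) (f p.2)) with hS2
  have hEset : {p : Fin n × Fin n | p.1 < p.2 ∧ Tangent (f p.1) (f p.2)} = ↑Ef := by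
    ext p; simp [hEf]
  rw [hEset, Set.ncard_coe_finset]
  have h1 : Ef.card ≤ S2.card := by
    apply Finset.card_le_card
    intro p hp
    rw [hEf, Finset.mem_filter] at hp
    rw [hS2, Finset.mem_filter]
    exact ⟨hp.1, hp.2.2⟩
  have h2 : S2.card = ∑ b, (N b).card := by
    rw [Finset.card_eq_sum_card_fiberwise
      (f := fun p : Fin n × Fin n => p.2) (t := Finset.univ) (fun p _ => Finset.mem_univ _)]
    refine Finset.sum_congr rfl (fun b _ => ?_)
    have himg : S2.filter (fun p => p.2 = b) = (N b).image (fun a => (a, b)) := by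
      ext p
      simp only [hS2, hN, Finset.mem_filter, Finset.mem_univ, true_and, Finset.mem_image]
      constructor
      · rintro ⟨ht, hpb⟩
        subst hpb
        exact ⟨p.1, ht, rfl⟩
      · rintro ⟨a, ha, rfl⟩
        exact ⟨ha, rfl⟩
    rw [himg, Finset.card_image_of_injective _ (fun a1 a2 h => (Prod.ext_iff.mp h).1)]
  set P : Finset (Fin n × (Fin (k+1) → Fin n)) :=
    Finset.univ.filter (fun q => ∀ m, Tangent (f (q.2 m)) (f q.1)) with hP
  have h3 : ∑ b, ((N b).card)^(k+1) = P.card := by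
    rw [Finset.card_eq_sum_card_fiberwise
      (f := fun q : Fin n × (Fin (k+1) → Fin n) => q.1) (t := Finset.univ)
      (fun q _ => Finset.mem_univ _)]
    refine (Finset.sum_congr rfl (fun b _ => ?_)).symm
    have himg : P.filter (fun q => q.1 = b) =
        (Fintype.piFinset (fun _ : Fin (k+1) => N b)).image (fun u => (b, u)) := by
      ext q
      simp only [hP, hN, Finset.mem_filter, Finset.mem_univ, true_and, Finset.mem_image,
        Fintype.mem_piFinset]
      constructor
      · rintro ⟨ht, hqb⟩
        subst hqb
        exact ⟨q.2, fun m => ht m, rfl⟩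
      · rintro ⟨u, hu, rfl⟩
        exact ⟨fun m => hu m, rfl⟩
    rw [himg, Finset.card_image_of_injective _ (fun u1 u2 h => (Prod.ext_iff.mp h).2),
      Fintype.card_piFinset]
    simp [Finset.prod_const]
  set CN : (Fin (k+1) → Fin n) → Finset (Fin n) :=
    fun u => Finset.univ.filter (fun bb => ∀ m, Tangent (f (u m)) (f bb)) with hCN
  have h4 : P.card = ∑ u : Fin (k+1) → Fin n, (CN u).card := by
    rw [Finset.card_eq_sum_card_fiberwise
      (f := fun q : Fin n × (Fin (k+1) → Fin n) => q.2) (t := Finset.univ)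
      (fun q _ => Finset.mem_univ _)]
    refine Finset.sum_congr rfl (fun u _ => ?_)
    have himg : P.filter (fun q => q.2 = u) = (CN u).image (fun bb => (bb, u)) := by
      ext q
      simp only [hP, hCN, Finset.mem_filter, Finset.mem_univ, true_and, Finset.mem_image]
      constructor
      · rintro ⟨ht, hqu⟩
        subst hqu
        exact ⟨q.1, ht, rfl⟩
      · rintro ⟨bb, hbb, rfl⟩
        exact ⟨hbb, rfl⟩
    rw [himg, Finset.card_image_of_injective _ (fun u1 u2 h => (Prod.ext_iff.mp h).1)]
  have h5 : ∀ u : Fin (k+1) → Fin n, Function.Injective u → (CN u).card ≤ TK k := by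
    intro u hu
    exact key_bound k f hcont hk2 hno3 u hu
  set bad := Finset.univ.filter (fun u : Fin (k+1) → Fin n => ¬ Function.Injective u) with hbad
  have hpair : ∀ m m' : Fin (k+1), m ≠ m' →
      (Finset.univ.filter (fun u : Fin (k+1) → Fin n => u m = u m')).card ≤ n^k := by
    intro m m' hmm
    have hle := Finset.card_le_card_of_injOn
      (s := Finset.univ.filter (fun u : Fin (k+1) → Fin n => u m = u m'))
      (t := (Finset.univ : Finset (Fin k → Fin n)))
      (fun (u : Fin (k+1) → Fin n) => (fun i : Fin k => u (m'.succAbove i)))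
      (fun u _ => Finset.mem_univ _) ?_
    · refine le_trans hle ?_
      rw [Finset.card_univ, Fintype.card_fun, Fintype.card_fin, Fintype.card_fin]
    · intro u hu v hv h
      simp only [Finset.coe_filter, Set.mem_setOf_eq, Finset.mem_univ, true_and] at hu hv
      funext j
      by_cases hj : j = m'
      · subst hj
        obtain ⟨i, hi⟩ := Fin.exists_succAbove_eq hmm
        have := congrFun h i
        simp only [hi] at this
        rw [← hu, ← hv]; exact this
      · obtain ⟨i, hi⟩ := Fin.exists_succAbove_eq (show j ≠ m' from hj)
        have := congrFun h i
        simpa only [hi] using this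
  have hbadcard : bad.card ≤ (k+1)*(k+1) * n^k := by
    have hsub : bad ⊆ (Finset.univ : Finset (Fin (k+1) × Fin (k+1))).biUnion
        (fun pr => if pr.1 ≠ pr.2 then
          Finset.univ.filter (fun u : Fin (k+1) → Fin n => u pr.1 = u pr.2) else ∅) := by
      intro u hu
      rw [hbad, Finset.mem_filter] at hu
      rw [Function.not_injective_iff] at hu
      obtain ⟨a, bb, hab, hne⟩ := hu.2
      refine Finset.mem_biUnion.mpr ⟨(a, bb), Finset.mem_univ _, ?_⟩
      rw [if_pos hne]
      exact Finset.mem_filter.mpr ⟨Finset.mem_univ _, hab⟩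
    refine le_trans (Finset.card_le_card hsub) (le_trans Finset.card_biUnion_le ?_)
    have hbound : ∀ pr ∈ (Finset.univ : Finset (Fin (k+1) × Fin (k+1))),
        (if pr.1 ≠ pr.2 then
          Finset.univ.filter (fun u : Fin (k+1) → Fin n => u pr.1 = u pr.2) else ∅).card ≤ n^k := by
      intro pr _
      by_cases h : pr.1 ≠ pr.2
      · rw [if_pos h]; exact hpair pr.1 pr.2 h
      · rw [if_neg h]; simp
    refine le_trans (Finset.sum_le_card_nsmul _ _ _ hbound) ?_
    rw [Finset.card_univ, Fintype.card_prod, Fintype.card_fin, smul_eq_mul, mul_assoc]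
  have h6 : ∑ u : Fin (k+1) → Fin n, (CN u).card ≤
      n^(k+1) * TK k + (k+1)*(k+1) * n^k * n := by
    calc ∑ u : Fin (k+1) → Fin n, (CN u).card
        ≤ ∑ u : Fin (k+1) → Fin n, (TK k + if u ∈ bad then n else 0) := by
          apply Finset.sum_le_sum
          intro u _
          by_cases hu : Function.Injective u
          · have h5' := h5 u hu
            simp only [hbad, Finset.mem_filter, Finset.mem_univ, true_and, hu, not_true_eq_false,
              if_false]
            omega
          · have hCNle : (CN u).card ≤ n := by
              refine le_trans (Finset.card_filter_le _ _) ?_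
              rw [Finset.card_univ, Fintype.card_fin]
            simp only [hbad, Finset.mem_filter, Finset.mem_univ, true_and, hu, not_false_eq_true,
              if_true]
            omega
      _ = n^(k+1) * TK k + bad.card * n := by
          rw [Finset.sum_add_distrib, Finset.sum_const, Finset.card_univ, Fintype.card_fun,
            Fintype.card_fin, Fintype.card_fin, smul_eq_mul]
          congr 1
          rw [Finset.sum_ite_mem, Finset.univ_inter, Finset.sum_const, smul_eq_mul]
      _ ≤ n^(k+1) * TK k + (k+1)*(k+1) * n^k * n := by
          have := Nat.mul_le_mul_right n hbadcard
          omega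
  have h7 : P.card ≤ C0 * n^(k+1) := by
    rw [h4]
    refine le_trans h6 ?_
    have hpow : n^k * n = n^(k+1) := (pow_succ n k).symm
    calc n^(k+1) * TK k + (k+1)*(k+1) * n^k * n
        = (TK k + (k+1)*(k+1)) * n^(k+1) := by rw [mul_assoc, hpow]; ring
      _ ≤ C0 * n^(k+1) := by
          apply Nat.mul_le_mul_right
          rw [hC0]
          have : (k+1)^2 = (k+1)*(k+1) := sq (k+1) ▸ by ring
          omega
  -- now the real-number computation
  have hreal : ((Ef.card : ℝ))^(k+1) ≤ (C0 : ℝ) * (n:ℝ)^(2*k+1) := by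
    have hpowsum := pow_sum_le_card_mul_sum_pow (s := (Finset.univ : Finset (Fin n)))
      (f := fun b => ((N b).card : ℝ)) (fun i _ => by positivity) k
    rw [Finset.card_univ, Fintype.card_fin] at hpowsum
    have hcast1 : ((∑ b, (N b).card : ℕ) : ℝ) = ∑ b, ((N b).card : ℝ) := by push_cast; rfl
    have hcast2 : ∑ b, ((N b).card : ℝ)^(k+1) = ((P.card : ℕ) : ℝ) := by
      rw [← h3]; push_cast; rfl
    calc ((Ef.card : ℝ))^(k+1)
        ≤ ((∑ b, (N b).card : ℕ) : ℝ)^(k+1) := by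
          apply pow_le_pow_left₀ (by positivity)
          exact_mod_cast h2 ▸ h1
      _ = (∑ b, ((N b).card : ℝ))^(k+1) := by rw [hcast1]
      _ ≤ (n:ℝ)^k * ∑ b, ((N b).card : ℝ)^(k+1) := hpowsum
      _ = (n:ℝ)^k * (P.card : ℝ) := by rw [hcast2]
      _ ≤ (n:ℝ)^k * ((C0:ℝ) * (n:ℝ)^(k+1)) := by
          apply mul_le_mul_of_nonneg_left _ (by positivity)
          exact_mod_cast h7
      _ = (C0 : ℝ) * (n:ℝ)^(2*k+1) := by ring
  have hEf0 : (0:ℝ) ≤ (Ef.card : ℝ) := Nat.cast_nonneg _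
  have hC01 : (1:ℝ) ≤ (C0 : ℝ) := by
    have : 1 ≤ C0 := by rw [hC0]; omega
    exact_mod_cast this
  have hKne : (k+1 : ℕ) ≠ 0 := Nat.succ_ne_zero k
  have hroot : (Ef.card : ℝ) ≤
      ((C0:ℝ) * (n:ℝ)^(2*k+1)) ^ (((k+1 : ℕ) : ℝ)⁻¹) := by
    rw [← Real.pow_rpow_inv_natCast hEf0 hKne]
    exact Real.rpow_le_rpow (by positivity) hreal (by positivity)
  have hsplit : ((C0:ℝ) * (n:ℝ)^(2*k+1)) ^ (((k+1 : ℕ) : ℝ)⁻¹)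
      = (C0:ℝ) ^ (((k+1 : ℕ) : ℝ)⁻¹) * ((n:ℝ)^(2*k+1)) ^ (((k+1 : ℕ) : ℝ)⁻¹) :=
    Real.mul_rpow (by positivity) (by positivity)
  have hCfac : (C0:ℝ) ^ (((k+1 : ℕ) : ℝ)⁻¹) ≤ (C0 : ℝ) := by
    nth_rewrite 2 [← Real.rpow_one (C0:ℝ)]
    apply Real.rpow_le_rpow_of_exponent_le hC01
    rw [inv_le_one_iff₀]
    right
    exact_mod_cast Nat.one_le_iff_ne_zero.mpr hKne
  have hnfac : ((n:ℝ)^(2*k+1)) ^ (((k+1 : ℕ) : ℝ)⁻¹) = (n:ℝ) ^ ((2:ℝ) - 1/((k:ℝ)+1)) := by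
    rw [← Real.rpow_natCast (n:ℝ) (2*k+1), ← Real.rpow_mul (Nat.cast_nonneg n)]
    congr 1
    have hk0 : ((k:ℝ)+1) ≠ 0 := by positivity
    push_cast
    field_simp
    ring
  calc (Ef.card : ℝ) ≤ ((C0:ℝ) * (n:ℝ)^(2*k+1)) ^ (((k+1 : ℕ) : ℝ)⁻¹) := hroot
    _ = (C0:ℝ) ^ (((k+1 : ℕ) : ℝ)⁻¹) * ((n:ℝ)^(2*k+1)) ^ (((k+1 : ℕ) : ℝ)⁻¹) := hsplit
    _ ≤ (C0:ℝ) * ((n:ℝ)^(2*k+1)) ^ (((k+1 : ℕ) : ℝ)⁻¹) := by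
        apply mul_le_mul_of_nonneg_right hCfac (by positivity)
    _ = (C0:ℝ) * (n:ℝ) ^ ((2:ℝ) - 1/((k:ℝ)+1)) := by rw [hnfac]
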